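/- The 23-term expression S_{ℤ₄×ℤ₃} is a valid rank decomposition of the 3×3 matrix multiplication tensor: M⟨3⟩ = −a₀^⊗3 + Σ_{j=0}^{1} (a₀ʲ N a₀⁻ʲ)^⊗3 + Σ_{j=0}^{3} (a₀ʲ E₁₁ a₀⁻ʲ)^⊗3 + Σ_{j=0}^{3} (a₀ʲ M a₀⁻ʲ)^⊗3 + Σ_{cyc} Σ_{j=0}^{3} cyclic permutations of (a₀ʲ P a₀⁻ʲ)⊗(a₀ʲ Q a₀⁻ʲ)⊗(a₀ʲ R a₀⁻ʲ), where a₀ = [[0,0,-1],[1,0,-1],[0,1,-1]], N = [[0,1,0],[0,1,0],[0,0,0]], E₁₁ = [[1,0,0],[0,0,0],[0,0,0]], M = [[0,-1,0],[1,-1,0],[0,0,0]], P = [[0,0,0],[0,0,1],[0,0,0]], Q = [[0,0,0],[0,0,0],[-1,1,0]], R = [[0,0,0],[0,1,-1],[0,1,-1]]. Equivalently, evaluating both sides as trilinear forms: for all 3×3 matrices X,Y,Z, trace(XYZ) equals the corresponding sum of 23 products of linear forms. -/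

import Mathlib

namespace Stmt10

/-- a₀ = [[0,0,-1],[1,0,-1],[0,1,-1]] -/
noncomputable def a₀ : Matrix (Fin 3) (Fin 3) ℂ := !![0, 0, -1; 1, 0, -1; 0, 1, -1]

/-- Conjugation by a₀ʲ. -/
noncomputable def cnj (j : ℕ) (M : Matrix (Fin 3) (Fin 3) ℂ) : Matrix (Fin 3) (Fin 3) ℂ :=
  a₀ ^ j * M * (a₀ ^ j)⁻¹

/-- The pairing of a coefficient matrix A with an argument matrix X:
the value of the linear form A on X, ⟨A,X⟩ = Σ_{i,j} A_{ij} X_{ij}. -/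
noncomputable def pr (A X : Matrix (Fin 3) (Fin 3) ℂ) : ℂ := ∑ i, ∑ j, A i j * X i j

noncomputable def N : Matrix (Fin 3) (Fin 3) ℂ := !![0, 1, 0; 0, 1, 0; 0, 0, 0]
noncomputable def E₁₁ : Matrix (Fin 3) (Fin 3) ℂ := !![1, 0, 0; 0, 0, 0; 0, 0, 0]
noncomputable def M : Matrix (Fin 3) (Fin 3) ℂ := !![0, -1, 0; 1, -1, 0; 0, 0, 0]
noncomputable def P : Matrix (Fin 3) (Fin 3) ℂ := !![0, 0, 0; 0, 0, 1; 0, 0, 0]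
noncomputable def Q : Matrix (Fin 3) (Fin 3) ℂ := !![0, 0, 0; 0, 0, 0; -1, 1, 0]
noncomputable def R : Matrix (Fin 3) (Fin 3) ℂ := !![0, 0, 0; 0, 1, -1; 0, 1, -1]

lemma apow0 : a₀ ^ (0:ℕ) = !![1, 0, 0; 0, 1, 0; 0, 0, 1] := by
  rw [pow_zero, Matrix.one_fin_three]
lemma apow1 : a₀ ^ (1:ℕ) = !![0, 0, -1; 1, 0, -1; 0, 1, -1] := by
  rw [pow_one, a₀]
lemma apow2 : a₀ ^ (2:ℕ) = !![0, -1, 1; 0, -1, 0; 1, -1, 0] := by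
  rw [sq, a₀]; norm_num [Matrix.mul_fin_three]
lemma apow3 : a₀ ^ (3:ℕ) = !![-1, 1, 0; -1, 0, 1; -1, 0, 0] := by
  rw [pow_succ, apow2, a₀]; norm_num [Matrix.mul_fin_three]
lemma ainv0 : (a₀ ^ (0:ℕ))⁻¹ = !![1, 0, 0; 0, 1, 0; 0, 0, 1] := by
  apply Matrix.inv_eq_right_inv; rw [apow0, Matrix.one_fin_three]; norm_num [Matrix.mul_fin_three]
lemma ainv1 : (a₀ ^ (1:ℕ))⁻¹ = !![-1, 1, 0; -1, 0, 1; -1, 0, 0] := by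
  apply Matrix.inv_eq_right_inv; rw [apow1, Matrix.one_fin_three]; norm_num [Matrix.mul_fin_three]
lemma ainv2 : (a₀ ^ (2:ℕ))⁻¹ = !![0, -1, 1; 0, -1, 0; 1, -1, 0] := by
  apply Matrix.inv_eq_right_inv; rw [apow2, Matrix.one_fin_three]; norm_num [Matrix.mul_fin_three]
lemma ainv3 : (a₀ ^ (3:ℕ))⁻¹ = !![0, 0, -1; 1, 0, -1; 0, 1, -1] := by
  apply Matrix.inv_eq_right_inv; rw [apow3, Matrix.one_fin_three]; norm_num [Matrix.mul_fin_three]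
lemma cN0 : cnj (0:ℕ) N = !![0, 1, 0; 0, 1, 0; 0, 0, 0] := by
  rw [cnj, ainv0, apow0, N]; norm_num [Matrix.mul_fin_three];
  try (funext i; fin_cases i <;> rfl)
lemma cN1 : cnj (1:ℕ) N = !![0, 0, 0; -1, 0, 1; -1, 0, 1] := by
  rw [cnj, ainv1, apow1, N]; norm_num [Matrix.mul_fin_three];
  try (funext i; fin_cases i <;> rfl)
lemma cE0 : cnj (0:ℕ) E₁₁ = !![1, 0, 0; 0, 0, 0; 0, 0, 0] := by
  rw [cnj, ainv0, apow0, E₁₁]; norm_num [Matrix.mul_fin_three];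
  try (funext i; fin_cases i <;> rfl)
lemma cE1 : cnj (1:ℕ) E₁₁ = !![0, 0, 0; -1, 1, 0; 0, 0, 0] := by
  rw [cnj, ainv1, apow1, E₁₁]; norm_num [Matrix.mul_fin_three];
  try (funext i; fin_cases i <;> rfl)
lemma cE2 : cnj (2:ℕ) E₁₁ = !![0, 0, 0; 0, 0, 0; 0, -1, 1] := by
  rw [cnj, ainv2, apow2, E₁₁]; norm_num [Matrix.mul_fin_three];
  try (funext i; fin_cases i <;> rfl)
lemma cE3 : cnj (3:ℕ) E₁₁ = !![0, 0, 1; 0, 0, 1; 0, 0, 1] := by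
  rw [cnj, ainv3, apow3, E₁₁]; norm_num [Matrix.mul_fin_three];
  try (funext i j; fin_cases i <;> fin_cases j <;> rfl)
lemma cM0 : cnj (0:ℕ) M = !![0, -1, 0; 1, -1, 0; 0, 0, 0] := by
  rw [cnj, ainv0, apow0, M]; norm_num [Matrix.mul_fin_three];
  try (funext i; fin_cases i <;> rfl)
lemma cM1 : cnj (1:ℕ) M = !![0, 0, 0; 1, 0, -1; 0, 1, -1] := by
  rw [cnj, ainv1, apow1, M]; norm_num [Matrix.mul_fin_three];
  try (funext i; fin_cases i <;> rfl)
lemma cM2 : cnj (2:ℕ) M = !![0, 0, -1; 0, 0, -1; 0, 1, -1] := by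
  rw [cnj, ainv2, apow2, M]; norm_num [Matrix.mul_fin_three];
  try (funext i j; fin_cases i <;> fin_cases j <;> rfl)
lemma cM3 : cnj (3:ℕ) M = !![0, 0, -1; 1, 0, -1; 1, 0, -1] := by
  rw [cnj, ainv3, apow3, M]; norm_num [Matrix.mul_fin_three];
  try (funext i j; fin_cases i <;> fin_cases j <;> rfl)
lemma cP0 : cnj (0:ℕ) P = !![0, 0, 0; 0, 0, 1; 0, 0, 0] := by
  rw [cnj, ainv0, apow0, P]; norm_num [Matrix.mul_fin_three];
  try (funext i; fin_cases i <;> rfl)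
lemma cP1 : cnj (1:ℕ) P = !![0, 0, 0; 0, 0, 0; -1, 0, 0] := by
  rw [cnj, ainv1, apow1, P]; norm_num [Matrix.mul_fin_three];
  try (funext i; fin_cases i <;> rfl)
lemma cP2 : cnj (2:ℕ) P = !![-1, 1, 0; -1, 1, 0; -1, 1, 0] := by
  rw [cnj, ainv2, apow2, P]; norm_num [Matrix.mul_fin_three];
  try (funext i j; fin_cases i <;> fin_cases j <;> rfl)
lemma cP3 : cnj (3:ℕ) P = !![0, 1, -1; 0, 0, 0; 0, 0, 0] := by
  rw [cnj, ainv3, apow3, P]; norm_num [Matrix.mul_fin_three];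
  try (funext i; fin_cases i <;> rfl)
lemma cQ0 : cnj (0:ℕ) Q = !![0, 0, 0; 0, 0, 0; -1, 1, 0] := by
  rw [cnj, ainv0, apow0, Q]; norm_num [Matrix.mul_fin_three];
  try (funext i; fin_cases i <;> rfl)
lemma cQ1 : cnj (1:ℕ) Q = !![0, 1, -1; 0, 1, -1; 0, 1, -1] := by
  rw [cnj, ainv1, apow1, Q]; norm_num [Matrix.mul_fin_three];
  try (funext i j; fin_cases i <;> fin_cases j <;> rfl)
lemma cQ2 : cnj (2:ℕ) Q = !![0, 0, -1; 0, 0, 0; 0, 0, 0] := by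
  rw [cnj, ainv2, apow2, Q]; norm_num [Matrix.mul_fin_three];
  try (funext i; fin_cases i <;> rfl)
lemma cQ3 : cnj (3:ℕ) Q = !![0, 0, 0; 1, 0, 0; 0, 0, 0] := by
  rw [cnj, ainv3, apow3, Q]; norm_num [Matrix.mul_fin_three];
  try (funext i; fin_cases i <;> rfl)
lemma cR0 : cnj (0:ℕ) R = !![0, 0, 0; 0, 1, -1; 0, 1, -1] := by
  rw [cnj, ainv0, apow0, R]; norm_num [Matrix.mul_fin_three];
  try (funext i; fin_cases i <;> rfl)
lemma cR1 : cnj (1:ℕ) R = !![0, 0, -1; 0, 0, -1; 0, 0, 0] := by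
  rw [cnj, ainv1, apow1, R]; norm_num [Matrix.mul_fin_three];
  try (funext i; fin_cases i <;> rfl)
lemma cR2 : cnj (2:ℕ) R = !![0, 0, 0; 1, 0, 0; 1, 0, 0] := by
  rw [cnj, ainv2, apow2, R]; norm_num [Matrix.mul_fin_three];
  try (funext i; fin_cases i <;> rfl)
lemma cR3 : cnj (3:ℕ) R = !![1, -1, 0; 1, -1, 0; 0, 0, 0] := by
  rw [cnj, ainv3, apow3, R]; norm_num [Matrix.mul_fin_three];
  try (funext i; fin_cases i <;> rfl)


lemma pr_expand (A X : Matrix (Fin 3) (Fin 3) ℂ) :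
    pr A X = A 0 0 * X 0 0 + A 0 1 * X 0 1 + A 0 2 * X 0 2
      + A 1 0 * X 1 0 + A 1 1 * X 1 1 + A 1 2 * X 1 2
      + A 2 0 * X 2 0 + A 2 1 * X 2 1 + A 2 2 * X 2 2 := by
  simp [pr, Fin.sum_univ_three]; ring

set_option maxHeartbeats 1600000

/-- The 23-term expression S_{ℤ₄×ℤ₃} is a valid rank decomposition of the
3×3 matrix multiplication tensor, evaluated as trilinear forms: for all 3×3 complex
matrices X, Y, Z, trace(XYZ) equals the corresponding sum of 23 products of linear
forms, namely −a₀^⊗3, the ℤ₄/ℤ₂-orbit of N^⊗3 (2 terms), the ℤ₄-orbits of E₁₁^⊗3 and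
M^⊗3 (4 terms each), and the ℤ₃×ℤ₄-orbit of P⊗Q⊗R (12 terms). -/
theorem stmt_10 (X Y Z : Matrix (Fin 3) (Fin 3) ℂ) :
    (X * Y * Z).trace =
      -(pr a₀ X * pr a₀ Y * pr a₀ Z)
      + ∑ j ∈ Finset.range 2, pr (cnj j N) X * pr (cnj j N) Y * pr (cnj j N) Z
      + ∑ j ∈ Finset.range 4, pr (cnj j E₁₁) X * pr (cnj j E₁₁) Y * pr (cnj j E₁₁) Z
      + ∑ j ∈ Finset.range 4, pr (cnj j M) X * pr (cnj j M) Y * pr (cnj j M) Z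
      + ∑ j ∈ Finset.range 4,
          (pr (cnj j P) X * pr (cnj j Q) Y * pr (cnj j R) Z
            + pr (cnj j Q) X * pr (cnj j R) Y * pr (cnj j P) Z
            + pr (cnj j R) X * pr (cnj j P) Y * pr (cnj j Q) Z) := by
  simp only [Finset.sum_range_succ, Finset.sum_range_zero,
    cN0, cN1, cE0, cE1, cE2, cE3, cM0, cM1, cM2, cM3,
    cP0, cP1, cP2, cP3, cQ0, cQ1, cQ2, cQ3, cR0, cR1, cR2, cR3]
  rw [a₀]
  simp only [pr_expand, Matrix.trace_fin_three, Matrix.mul_apply, Fin.sum_univ_three]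
  norm_num [Matrix.cons_val', Matrix.cons_val_zero, Matrix.cons_val_one, Matrix.head_cons,
    Matrix.empty_val', Matrix.cons_val_fin_one, Matrix.head_fin_const, Matrix.cons_val_two,
    Matrix.tail_cons, Matrix.vecHead, Matrix.vecTail]
  ring

end Stmt10
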